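/- arXiv:1701.03916 — 5 statements merged into one kernel-verified Lean document; each statement's English description precedes it below -/
import Mathlib

section
/- Let (X, μ) be a measure space, let α, β > 1 be conjugate exponents (1/α + 1/β = 1), and let p : X → ℝ be a nonnegative measurable function with 0 < ∫ p(x)^α dμ(x) < ∞. Then for every λ > 0, the Hölder pseudo-divergence from p to the density q(x) = λ · p(x)^{α−1} vanishes: D_α^H(p : λ p^{α−1}) = 0. In particular the Hölder pseudo-divergence is improper: it can vanish between densities that are not proportional when α ≠ 2. -/
open MeasureTheory

/-- The Hölder pseudo-divergence
`D_α^H(p:q) = -log( (∫ p q dμ) / ((∫ p^α dμ)^{1/α} (∫ q^β dμ)^{1/β}) )`. -/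
noncomputable def holderPseudoDiv {X : Type*} [MeasurableSpace X] (μ : Measure X)
    (α β : ℝ) (p q : X → ℝ) : ℝ :=
  - Real.log ((∫ x, p x * q x ∂μ) /
      ((∫ x, p x ^ α ∂μ) ^ (1 / α) * (∫ x, q x ^ β ∂μ) ^ (1 / β)))

/-- The Hölder pseudo-divergence is improper: for any `c > 0`,
`D_α^H(p : c · p^{α-1}) = 0`. -/
theorem holderPseudoDiv_improper
    {X : Type*} [MeasurableSpace X] (μ : Measure X)
    (p : X → ℝ) (hp : Measurable p) (hp_nonneg : ∀ x, 0 ≤ p x)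
    (α β : ℝ) (hα : 1 < α) (hβ : 1 < β) (hconj : 1 / α + 1 / β = 1)
    (hpα_int : Integrable (fun x => p x ^ α) μ)
    (hpα_pos : 0 < ∫ x, p x ^ α ∂μ)
    (c : ℝ) (hc : 0 < c) :
    holderPseudoDiv μ α β p (fun x => c * p x ^ (α - 1)) = 0 := by
  have hα0 : (0:ℝ) < α := lt_trans one_pos hα
  have hβ0 : (0:ℝ) < β := lt_trans one_pos hβ
  have hαβ : (α - 1) * β = α := by
    field_simp at hconj
    nlinarith [hconj]
  have h1 : ∀ x, p x * (c * p x ^ (α - 1)) = c * p x ^ α := by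
    intro x
    have : p x * p x ^ (α - 1) = p x ^ α := by
      have e : α = 1 + (α - 1) := by ring
      rw [e, Real.rpow_add' (hp_nonneg x) (by rw [← e]; positivity), Real.rpow_one, ← e]
    rw [← this]; ring
  have h2 : ∀ x, (c * p x ^ (α - 1)) ^ β = c ^ β * p x ^ α := by
    intro x
    rw [Real.mul_rpow hc.le (Real.rpow_nonneg (hp_nonneg x) _),
      ← Real.rpow_mul (hp_nonneg x), hαβ]
  set A := ∫ x, p x ^ α ∂μ with hA
  have hnum : (∫ x, p x * (c * p x ^ (α - 1)) ∂μ) = c * A := by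
    simp_rw [h1]; rw [integral_const_mul]
  have hden : (∫ x, (c * p x ^ (α - 1)) ^ β ∂μ) = c ^ β * A := by
    simp_rw [h2]; rw [integral_const_mul]
  unfold holderPseudoDiv
  rw [hnum, hden, Real.mul_rpow (Real.rpow_nonneg hc.le _) hpα_pos.le,
    ← Real.rpow_mul hc.le, mul_one_div_cancel hβ0.ne', Real.rpow_one]
  have : A ^ (1/α) * (c * A ^ (1/β)) = c * A := by
    have hAA : A ^ (1/α) * A ^ (1/β) = A := by
      rw [← Real.rpow_add hpα_pos, hconj, Real.rpow_one]
    calc A ^ (1/α) * (c * A ^ (1/β)) = c * (A ^ (1/α) * A ^ (1/β)) := by ring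
      _ = c * A := by rw [hAA]
  rw [this, div_self (by positivity), Real.log_one, neg_zero]
end

section
/- Let (X, μ) be a measure space, let α, β > 1 be conjugate exponents (1/α + 1/β = 1), and let p, q : X → ℝ be nonnegative measurable probability densities (∫ p dμ = ∫ q dμ = 1) with 0 < ∫ p^{1/α} dμ < ∞, 0 < ∫ q^{1/β} dμ < ∞ and 0 < ∫ p^{1/α} q^{1/β} dμ. Define the escort distributions p_α^E(x) = p(x)^{1/α} / ∫ p^{1/α} dμ and q_β^E(x) = q(x)^{1/β} / ∫ q^{1/β} dμ. Then the Hölder escort divergence equals the skew Bhattacharyya divergence: D_α^H(p_α^E : q_β^E) = −log ∫ p(x)^{1/α} q(x)^{1−1/α} dμ(x) = B_{1/α}(p : q). -/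
open MeasureTheory

/-- The Hölder escort divergence equals the skew Bhattacharyya divergence:
`D_α^H(p_α^E : q_β^E) = -log ∫ p^{1/α} q^{1-1/α} dμ = B_{1/α}(p:q)`. -/
theorem holder_escort_eq_skew_bhattacharyya
    {X : Type*} [MeasurableSpace X] (μ : Measure X)
    (p q : X → ℝ) (hp : Measurable p) (hq : Measurable q)
    (hp_nonneg : ∀ x, 0 ≤ p x) (hq_nonneg : ∀ x, 0 ≤ q x)
    (α β : ℝ) (hα : 1 < α) (hβ : 1 < β) (hconj : 1 / α + 1 / β = 1)
    (hp_prob : ∫ x, p x ∂μ = 1) (hq_prob : ∫ x, q x ∂μ = 1)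
    (hpα_int : Integrable (fun x => p x ^ (1 / α)) μ)
    (hpα_pos : 0 < ∫ x, p x ^ (1 / α) ∂μ)
    (hqβ_int : Integrable (fun x => q x ^ (1 / β)) μ)
    (hqβ_pos : 0 < ∫ x, q x ^ (1 / β) ∂μ)
    (hpq_pos : 0 < ∫ x, p x ^ (1 / α) * q x ^ (1 / β) ∂μ) :
    holderPseudoDiv μ α β
        (fun x => p x ^ (1 / α) / ∫ y, p y ^ (1 / α) ∂μ)
        (fun x => q x ^ (1 / β) / ∫ y, q y ^ (1 / β) ∂μ) =
      - Real.log (∫ x, p x ^ (1 / α) * q x ^ (1 - 1 / α) ∂μ) := by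
  have hα0 : α ≠ 0 := by positivity
  have hβ0 : β ≠ 0 := by positivity
  set A := ∫ y, p y ^ (1 / α) ∂μ with hA
  set B := ∫ y, q y ^ (1 / β) ∂μ with hB
  have hA0 : A ≠ 0 := ne_of_gt hpα_pos
  have hB0 : B ≠ 0 := ne_of_gt hqβ_pos
  have hAnn : 0 ≤ A := le_of_lt hpα_pos
  have hBnn : 0 ≤ B := le_of_lt hqβ_pos
  have h1 : 1 - 1 / α = 1 / β := by linarith
  rw [holderPseudoDiv]
  have e1 : ∫ x, (p x ^ (1 / α) / A) * (q x ^ (1 / β) / B) ∂μ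
      = (∫ x, p x ^ (1 / α) * q x ^ (1 / β) ∂μ) / (A * B) := by
    simp_rw [div_mul_div_comm]
    exact integral_div _ _
  have e2 : ∫ x, (p x ^ (1 / α) / A) ^ α ∂μ = 1 / A ^ α := by
    have h : ∀ x, (p x ^ (1 / α) / A) ^ α = p x / A ^ α := by
      intro x
      rw [Real.div_rpow (Real.rpow_nonneg (hp_nonneg x) _) hAnn,
        ← Real.rpow_mul (hp_nonneg x), one_div_mul_cancel hα0, Real.rpow_one]
    simp_rw [h]
    rw [integral_div, hp_prob]
  have e3 : ∫ x, (q x ^ (1 / β) / B) ^ β ∂μ = 1 / B ^ β := by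
    have h : ∀ x, (q x ^ (1 / β) / B) ^ β = q x / B ^ β := by
      intro x
      rw [Real.div_rpow (Real.rpow_nonneg (hq_nonneg x) _) hBnn,
        ← Real.rpow_mul (hq_nonneg x), one_div_mul_cancel hβ0, Real.rpow_one]
    simp_rw [h]
    rw [integral_div, hq_prob]
  simp only [e1, e2, e3]
  have e4 : ((1 : ℝ) / A ^ α) ^ (1 / α) = 1 / A := by
    rw [Real.div_rpow zero_le_one (Real.rpow_nonneg hAnn _), Real.one_rpow,
      ← Real.rpow_mul hAnn, mul_one_div_cancel hα0, Real.rpow_one]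
  have e5 : ((1 : ℝ) / B ^ β) ^ (1 / β) = 1 / B := by
    rw [Real.div_rpow zero_le_one (Real.rpow_nonneg hBnn _), Real.one_rpow,
      ← Real.rpow_mul hBnn, mul_one_div_cancel hβ0, Real.rpow_one]
  rw [e4, e5]
  have e6 : (∫ x, p x ^ (1 / α) * q x ^ (1 / β) ∂μ) / (A * B) / (1 / A * (1 / B))
      = ∫ x, p x ^ (1 / α) * q x ^ (1 / β) ∂μ := by
    field_simp
  rw [e6]
  simp_rw [h1]
end

section
/- Let (X, μ) be a measure space, let α, β > 1 be conjugate exponents (1/α + 1/β = 1), let γ > 0, and let p, q : X → ℝ be nonnegative measurable functions with 0 < ∫ p^γ dμ < ∞, 0 < ∫ q^γ dμ < ∞ and 0 < ∫ p^{γ/α} q^{γ/β} dμ. Define the escort distributions p_{1/γ}^E(x) = p(x)^γ / ∫ p^γ dμ and q_{1/γ}^E(x) = q(x)^γ / ∫ q^γ dμ. Then the Hölder divergence equals the skew Bhattacharyya divergence between the escort distributions: D_{α,γ}^H(p : q) = B_{1/α}(p_{1/γ}^E : q_{1/γ}^E) = −log ∫ (p_{1/γ}^E(x))^{1/α} (q_{1/γ}^E(x))^{1/β}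 dμ(x). -/
open MeasureTheory

/-- The (proper) Hölder divergence
`D_{α,γ}^H(p:q) = -log( (∫ p^{γ/α} q^{γ/β} dμ) / ((∫ p^γ dμ)^{1/α} (∫ q^γ dμ)^{1/β}) )`. -/
noncomputable def holderDiv {X : Type*} [MeasurableSpace X] (μ : Measure X)
    (α β γ : ℝ) (p q : X → ℝ) : ℝ :=
  - Real.log ((∫ x, p x ^ (γ / α) * q x ^ (γ / β) ∂μ) /
      ((∫ x, p x ^ γ ∂μ) ^ (1 / α) * (∫ x, q x ^ γ ∂μ) ^ (1 / β)))

/-- The Hölder divergence equals the skew Bhattacharyya divergence between the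
escort distributions `p_{1/γ}^E = p^γ / ∫ p^γ dμ` and `q_{1/γ}^E = q^γ / ∫ q^γ dμ`:
`D_{α,γ}^H(p:q) = B_{1/α}(p_{1/γ}^E : q_{1/γ}^E)
  = -log ∫ (p_{1/γ}^E)^{1/α} (q_{1/γ}^E)^{1/β} dμ`. -/
theorem holderDiv_eq_skew_bhattacharyya_of_escorts
    {X : Type*} [MeasurableSpace X] (μ : Measure X)
    (p q : X → ℝ) (hp : Measurable p) (hq : Measurable q)
    (hp_nonneg : ∀ x, 0 ≤ p x) (hq_nonneg : ∀ x, 0 ≤ q x)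
    (α β : ℝ) (hα : 1 < α) (hβ : 1 < β) (hconj : 1 / α + 1 / β = 1)
    (γ : ℝ) (hγ : 0 < γ)
    (hpγ_int : Integrable (fun x => p x ^ γ) μ)
    (hpγ_pos : 0 < ∫ x, p x ^ γ ∂μ)
    (hqγ_int : Integrable (fun x => q x ^ γ) μ)
    (hqγ_pos : 0 < ∫ x, q x ^ γ ∂μ)
    (hpq_pos : 0 < ∫ x, p x ^ (γ / α) * q x ^ (γ / β) ∂μ) :
    holderDiv μ α β γ p q =
      - Real.log (∫ x, (p x ^ γ / ∫ y, p y ^ γ ∂μ) ^ (1 / α) *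
          (q x ^ γ / ∫ y, q y ^ γ ∂μ) ^ (1 / β) ∂μ) := by
  set P := ∫ y, p y ^ γ ∂μ with hP
  set Q := ∫ y, q y ^ γ ∂μ with hQ
  have hstep : ∀ x, (p x ^ γ / P) ^ (1 / α) * (q x ^ γ / Q) ^ (1 / β)
      = (1 / (P ^ (1 / α) * Q ^ (1 / β))) * (p x ^ (γ / α) * q x ^ (γ / β)) := by
    intro x
    rw [Real.div_rpow (Real.rpow_nonneg (hp_nonneg x) γ) hpγ_pos.le,
      Real.div_rpow (Real.rpow_nonneg (hq_nonneg x) γ) hqγ_pos.le,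
      ← Real.rpow_mul (hp_nonneg x), ← Real.rpow_mul (hq_nonneg x),
      mul_one_div, mul_one_div]
    ring
  have hint : (∫ x, (p x ^ γ / P) ^ (1 / α) * (q x ^ γ / Q) ^ (1 / β) ∂μ)
      = (1 / (P ^ (1 / α) * Q ^ (1 / β))) * ∫ x, p x ^ (γ / α) * q x ^ (γ / β) ∂μ := by
    simp_rw [hstep]
    exact integral_const_mul _ _
  rw [hint, one_div_mul_eq_div]
  rfl
end

section
/- Let (X, μ) be a measure space, t : X → ℝ^d a measurable function, and let α, β > 1 be conjugate exponents (1/α + 1/β = 1). Let θ_p, θ_q ∈ ℝ^d be such that Z(θ) = ∫ exp⟨θ, t(x)⟩ dμ(x) is finite and positive at each of θ_p, θ_q, α θ_p, β θ_q and θ_p + θ_q; define F(θ) = log Z(θ) and p_θ(x) = exp(⟨θ, t(x)⟩ − F(θ)). Then the Hölder pseudo-divergence between p_{θ_p} and p_{θ_q} admits the closed form D_α^H(p_{θ_p} : p_{θ_q}) = (1/α)·F(α θ_p) + (1/β)·F(β θ_q) − F(θ_p + θ_q). -/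
open MeasureTheory RealInnerProductSpace

/-- The log-normalizer `F(θ) = log ∫ exp⟪θ, t(x)⟫ dμ(x)` of an exponential
family with sufficient statistic `t`. -/
noncomputable def logNormalizer {X : Type*} [MeasurableSpace X] (μ : Measure X)
    {d : ℕ} (t : X → EuclideanSpace ℝ (Fin d)) (θ : EuclideanSpace ℝ (Fin d)) : ℝ :=
  Real.log (∫ x, Real.exp ⟪θ, t x⟫ ∂μ)

/-- The exponential-family density `p_θ(x) = exp(⟪θ, t(x)⟫ - F(θ))`. -/
noncomputable def expFamDensity {X : Type*} [MeasurableSpace X] (μ : Measure X)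
    {d : ℕ} (t : X → EuclideanSpace ℝ (Fin d)) (θ : EuclideanSpace ℝ (Fin d))
    (x : X) : ℝ :=
  Real.exp (⟪θ, t x⟫ - logNormalizer μ t θ)

/-- Closed form of the Hölder pseudo-divergence for exponential families:
`D_α^H(p_{θp} : p_{θq}) = (1/α) F(α θp) + (1/β) F(β θq) - F(θp + θq)`. -/
theorem holderPseudoDiv_expFam_closed_form
    {X : Type*} [MeasurableSpace X] (μ : Measure X) {d : ℕ}
    (t : X → EuclideanSpace ℝ (Fin d)) (ht : Measurable t)
    (α β : ℝ) (hα : 1 < α) (hβ : 1 < β) (hconj : 1 / α + 1 / β = 1)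
    (θp θq : EuclideanSpace ℝ (Fin d))
    (hZp_int : Integrable (fun x => Real.exp ⟪θp, t x⟫) μ)
    (hZp_pos : 0 < ∫ x, Real.exp ⟪θp, t x⟫ ∂μ)
    (hZq_int : Integrable (fun x => Real.exp ⟪θq, t x⟫) μ)
    (hZq_pos : 0 < ∫ x, Real.exp ⟪θq, t x⟫ ∂μ)
    (hZαp_int : Integrable (fun x => Real.exp ⟪α • θp, t x⟫) μ)
    (hZαp_pos : 0 < ∫ x, Real.exp ⟪α • θp, t x⟫ ∂μ)
    (hZβq_int : Integrable (fun x => Real.exp ⟪β • θq, t x⟫) μ)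
    (hZβq_pos : 0 < ∫ x, Real.exp ⟪β • θq, t x⟫ ∂μ)
    (hZpq_int : Integrable (fun x => Real.exp ⟪θp + θq, t x⟫) μ)
    (hZpq_pos : 0 < ∫ x, Real.exp ⟪θp + θq, t x⟫ ∂μ) :
    holderPseudoDiv μ α β (expFamDensity μ t θp) (expFamDensity μ t θq) =
      (1 / α) * logNormalizer μ t (α • θp) + (1 / β) * logNormalizer μ t (β • θq) -
        logNormalizer μ t (θp + θq) := by

  have hα0 : (α:ℝ) ≠ 0 := by linarith
  have hβ0 : (β:ℝ) ≠ 0 := by linarith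
  set Fp := logNormalizer μ t θp with hFp
  set Fq := logNormalizer μ t θq with hFq
  set Zα := ∫ x, Real.exp ⟪α • θp, t x⟫ ∂μ with hZα
  set Zβ := ∫ x, Real.exp ⟪β • θq, t x⟫ ∂μ with hZβ
  set Zpq := ∫ x, Real.exp ⟪θp + θq, t x⟫ ∂μ with hZpq
  have hI1 : (∫ x, expFamDensity μ t θp x * expFamDensity μ t θq x ∂μ)
      = Real.exp (-(Fp + Fq)) * Zpq := by
    rw [hZpq, ← integral_const_mul]
    congr 1 with x
    simp only [expFamDensity, ← Real.exp_add, inner_add_left]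
    rw [← hFp, ← hFq]
    ring_nf
  have hI2 : (∫ x, expFamDensity μ t θp x ^ α ∂μ)
      = Real.exp (-(α * Fp)) * Zα := by
    rw [hZα, ← integral_const_mul]
    congr 1 with x
    simp only [expFamDensity, ← Real.exp_add, ← Real.exp_mul,
      real_inner_smul_left]
    rw [← hFp]
    ring_nf
  have hI3 : (∫ x, expFamDensity μ t θq x ^ β ∂μ)
      = Real.exp (-(β * Fq)) * Zβ := by
    rw [hZβ, ← integral_const_mul]
    congr 1 with x
    simp only [expFamDensity, ← Real.exp_add, ← Real.exp_mul,
      real_inner_smul_left]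
    rw [← hFq]
    ring_nf
  have h2 : (Real.exp (-(α * Fp)) * Zα) ^ (1/α)
      = Real.exp (-Fp) * Zα ^ (1/α) := by
    rw [Real.mul_rpow (Real.exp_pos _).le hZαp_pos.le, ← Real.exp_mul]
    congr 2
    field_simp
  have h3 : (Real.exp (-(β * Fq)) * Zβ) ^ (1/β)
      = Real.exp (-Fq) * Zβ ^ (1/β) := by
    rw [Real.mul_rpow (Real.exp_pos _).le hZβq_pos.le, ← Real.exp_mul]
    congr 2
    field_simp
  have hZαr_pos : 0 < Zα ^ (1/α) := Real.rpow_pos_of_pos hZαp_pos _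
  have hZβr_pos : 0 < Zβ ^ (1/β) := Real.rpow_pos_of_pos hZβq_pos _
  unfold holderPseudoDiv
  rw [hI1, hI2, hI3, h2, h3]
  have hexp : Real.exp (-(Fp + Fq)) = Real.exp (-Fp) * Real.exp (-Fq) := by
    rw [← Real.exp_add]; ring_nf
  have hratio : Real.exp (-(Fp + Fq)) * Zpq /
      (Real.exp (-Fp) * Zα ^ (1/α) * (Real.exp (-Fq) * Zβ ^ (1/β)))
      = Zpq / (Zα ^ (1/α) * Zβ ^ (1/β)) := by
    rw [hexp]
    field_simp
  rw [hratio, Real.log_div hZpq_pos.ne' (by positivity),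
    Real.log_mul hZαr_pos.ne' hZβr_pos.ne',
    Real.log_rpow hZαp_pos, Real.log_rpow hZβq_pos]
  simp only [logNormalizer]
  ring
end

section
/- Let (X, μ) be a measure space, t : X → ℝ^d a measurable function, let α, β > 1 be conjugate exponents (1/α + 1/β = 1) and let γ > 0. Let θ_p, θ_q ∈ ℝ^d be such that Z(θ) = ∫ exp⟨θ, t(x)⟩ dμ(x) is finite and positive at each of θ_p, θ_q, γ θ_p, γ θ_q and (γ/α) θ_p + (γ/β) θ_q; define F(θ) = log Z(θ) and p_θ(x) = exp(⟨θ, t(x)⟩ − F(θ)). Then the Hölder divergence between p_{θ_p} and p_{θ_q} admits the closed form D_{α,γ}^H(p_{θ_p} : p_{θ_q}) = (1/α)·F(γ θ_p) + (1/β)·F(γ θ_q) − F( (γ/α) θ_p + (γ/β) θ_q ). -/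
open MeasureTheory RealInnerProductSpace

set_option maxHeartbeats 1000000 in
/-- Closed form of the Hölder divergence for exponential families:
`D_{α,γ}^H(p_{θp} : p_{θq}) = (1/α) F(γ θp) + (1/β) F(γ θq) - F((γ/α) θp + (γ/β) θq)`. -/
theorem holderDiv_expFam_closed_form
    {X : Type*} [MeasurableSpace X] (μ : Measure X) {d : ℕ}
    (t : X → EuclideanSpace ℝ (Fin d)) (ht : Measurable t)
    (α β : ℝ) (hα : 1 < α) (hβ : 1 < β) (hconj : 1 / α + 1 / β = 1)
    (γ : ℝ) (hγ : 0 < γ)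
    (θp θq : EuclideanSpace ℝ (Fin d))
    (hZp_int : Integrable (fun x => Real.exp ⟪θp, t x⟫) μ)
    (hZp_pos : 0 < ∫ x, Real.exp ⟪θp, t x⟫ ∂μ)
    (hZq_int : Integrable (fun x => Real.exp ⟪θq, t x⟫) μ)
    (hZq_pos : 0 < ∫ x, Real.exp ⟪θq, t x⟫ ∂μ)
    (hZγp_int : Integrable (fun x => Real.exp ⟪γ • θp, t x⟫) μ)
    (hZγp_pos : 0 < ∫ x, Real.exp ⟪γ • θp, t x⟫ ∂μ)
    (hZγq_int : Integrable (fun x => Real.exp ⟪γ • θq, t x⟫) μ)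
    (hZγq_pos : 0 < ∫ x, Real.exp ⟪γ • θq, t x⟫ ∂μ)
    (hZmix_int : Integrable (fun x => Real.exp ⟪(γ / α) • θp + (γ / β) • θq, t x⟫) μ)
    (hZmix_pos : 0 < ∫ x, Real.exp ⟪(γ / α) • θp + (γ / β) • θq, t x⟫ ∂μ) :
    holderDiv μ α β γ (expFamDensity μ t θp) (expFamDensity μ t θq) =
      (1 / α) * logNormalizer μ t (γ • θp) + (1 / β) * logNormalizer μ t (γ • θq) -
        logNormalizer μ t ((γ / α) • θp + (γ / β) • θq) := by
  have hα0 : (0:ℝ) < α := lt_trans one_pos hα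
  have hβ0 : (0:ℝ) < β := lt_trans one_pos hβ
  set Fp := logNormalizer μ t θp with hFpdef
  set Fq := logNormalizer μ t θq with hFqdef
  have hmix : ∀ x, expFamDensity μ t θp x ^ (γ / α) * expFamDensity μ t θq x ^ (γ / β)
      = Real.exp (-(γ/α)*Fp - (γ/β)*Fq) * Real.exp ⟪(γ / α) • θp + (γ / β) • θq, t x⟫ := by
    intro x
    rw [expFamDensity, expFamDensity, ← Real.exp_mul, ← Real.exp_mul, ← Real.exp_add,
      ← Real.exp_add]
    congr 1
    rw [inner_add_left, real_inner_smul_left, real_inner_smul_left]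
    ring
  have hpγ : ∀ x, expFamDensity μ t θp x ^ γ
      = Real.exp (-(γ*Fp)) * Real.exp ⟪γ • θp, t x⟫ := by
    intro x
    rw [expFamDensity, ← Real.exp_mul, ← Real.exp_add]
    congr 1
    rw [real_inner_smul_left]; ring
  have hqγ : ∀ x, expFamDensity μ t θq x ^ γ
      = Real.exp (-(γ*Fq)) * Real.exp ⟪γ • θq, t x⟫ := by
    intro x
    rw [expFamDensity, ← Real.exp_mul, ← Real.exp_add]
    congr 1
    rw [real_inner_smul_left]; ring
  have Imix : (∫ x, expFamDensity μ t θp x ^ (γ / α) * expFamDensity μ t θq x ^ (γ / β) ∂μ)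
      = Real.exp (-(γ/α)*Fp - (γ/β)*Fq) *
        ∫ x, Real.exp ⟪(γ / α) • θp + (γ / β) • θq, t x⟫ ∂μ := by
    simp_rw [hmix]; exact integral_const_mul _ _
  have Ip : (∫ x, expFamDensity μ t θp x ^ γ ∂μ)
      = Real.exp (-(γ*Fp)) * ∫ x, Real.exp ⟪γ • θp, t x⟫ ∂μ := by
    simp_rw [hpγ]; exact integral_const_mul _ _
  have Iq : (∫ x, expFamDensity μ t θq x ^ γ ∂μ)
      = Real.exp (-(γ*Fq)) * ∫ x, Real.exp ⟪γ • θq, t x⟫ ∂μ := by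
    simp_rw [hqγ]; exact integral_const_mul _ _
  set Zm := ∫ x, Real.exp ⟪(γ / α) • θp + (γ / β) • θq, t x⟫ ∂μ
  set Zp := ∫ x, Real.exp ⟪γ • θp, t x⟫ ∂μ
  set Zq := ∫ x, Real.exp ⟪γ • θq, t x⟫ ∂μ
  rw [holderDiv, Imix, Ip, Iq]
  rw [Real.mul_rpow (Real.exp_nonneg _) hZγp_pos.le,
    Real.mul_rpow (Real.exp_nonneg _) hZγq_pos.le, ← Real.exp_mul, ← Real.exp_mul]
  have h1 : Real.exp (-(γ * Fp) * (1/α)) * Zp ^ (1/α) *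
      (Real.exp (-(γ * Fq) * (1/β)) * Zq ^ (1/β)) ≠ 0 := by
    positivity
  have h2 : Real.exp (-(γ/α)*Fp - (γ/β)*Fq) * Zm ≠ 0 := by positivity
  rw [Real.log_div h2 h1,
    Real.log_mul (Real.exp_ne_zero _) (ne_of_gt hZmix_pos),
    Real.log_mul (by positivity) (by positivity),
    Real.log_mul (Real.exp_ne_zero _) (by positivity),
    Real.log_mul (Real.exp_ne_zero _) (by positivity),
    Real.log_rpow hZγp_pos, Real.log_rpow hZγq_pos,
    Real.log_exp, Real.log_exp, Real.log_exp]
  simp only [logNormalizer]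
  ring
end
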